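/- The average sufficient statistic t̄ lies outside the polytope C if and only if the empirical KLIEP loss ℓ is unbounded from below, i.e., for every M ∈ ℝ there exists Δ ∈ ℝ^k with ℓ(Δ) < M. (Theorem 1(iii).) -/

import Mathlib

open scoped RealInnerProductSpace

/-- The empirical KLIEP loss
`ℓ(Δ) = -⟪Δ, t̄⟫ + log((1/n) ∑_j exp ⟪Δ, t_j⟫)`. -/
noncomputable def kliepLoss {k n : ℕ} (tbar : EuclideanSpace ℝ (Fin k))
    (t : Fin n → EuclideanSpace ℝ (Fin k)) (Δ : EuclideanSpace ℝ (Fin k)) : ℝ :=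
  -⟪Δ, tbar⟫ + Real.log ((1 / (n : ℝ)) * ∑ j, Real.exp ⟪Δ, t j⟫)

/-- Theorem 1(iii): `t̄ ∉ C` iff the empirical KLIEP loss is unbounded from below. -/
theorem kliep_unbounded_iff_not_mem_hull {k n : ℕ} (hk : 1 ≤ k) (hn : 1 ≤ n)
    (tbar : EuclideanSpace ℝ (Fin k)) (t : Fin n → EuclideanSpace ℝ (Fin k)) :
    tbar ∉ convexHull ℝ (Set.range t) ↔
      ∀ M : ℝ, ∃ Δ : EuclideanSpace ℝ (Fin k), kliepLoss tbar t Δ < M := by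
  have hn0 : (0 : ℝ) < n := by exact_mod_cast hn
  have hSpos : ∀ Δ : EuclideanSpace ℝ (Fin k),
      (0 : ℝ) < ∑ j, Real.exp ⟪Δ, t j⟫ := by
    intro Δ
    have : Nonempty (Fin n) := ⟨⟨0, hn⟩⟩
    exact Finset.sum_pos (fun j _ => Real.exp_pos _) Finset.univ_nonempty
  constructor
  · -- unboundedness from separation
    intro hout M
    have hcompact : IsCompact (convexHull ℝ (Set.range t)) :=
      (Set.finite_range t).isCompact_convexHull (𝕜 := ℝ)
    obtain ⟨f, u, hfu, huf⟩ := geometric_hahn_banach_closed_point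
      (convex_convexHull ℝ _) hcompact.isClosed hout
    set v : EuclideanSpace ℝ (Fin k) := (InnerProductSpace.toDual ℝ _).symm f with hv
    have hvf : ∀ x, ⟪v, x⟫ = f x := fun x => InnerProductSpace.toDual_symm_apply
    have hε : (0 : ℝ) < f tbar - u := by linarith
    set ε := f tbar - u with hεdef
    set c : ℝ := max 1 ((1 - M) / ε) with hc
    have hc1 : (1 : ℝ) ≤ c := le_max_left _ _
    have hc0 : (0 : ℝ) ≤ c := by linarith
    refine ⟨c • v, ?_⟩
    have hinner : ∀ x, ⟪c • v, x⟫ = c * f x := by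
      intro x; rw [real_inner_smul_left, hvf]
    have hle : ∀ j, Real.exp ⟪c • v, t j⟫ ≤ Real.exp (c * u) := by
      intro j
      have hj : f (t j) < u := hfu _ (subset_convexHull ℝ _ (Set.mem_range_self j))
      exact Real.exp_le_exp.2 (by rw [hinner]; exact mul_le_mul_of_nonneg_left hj.le hc0)
    have hsum : ∑ j, Real.exp ⟪c • v, t j⟫ ≤ n * Real.exp (c * u) := by
      calc ∑ j, Real.exp ⟪c • v, t j⟫ ≤ ∑ _j : Fin n, Real.exp (c * u) :=
            Finset.sum_le_sum fun j _ => hle j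
        _ = n * Real.exp (c * u) := by simp [Finset.sum_const, mul_comm]
    have hlog : Real.log ((1 / (n : ℝ)) * ∑ j, Real.exp ⟪c • v, t j⟫) ≤ c * u := by
      rw [Real.log_le_iff_le_exp (mul_pos (by positivity) (hSpos _))]
      calc (1 / (n : ℝ)) * ∑ j, Real.exp ⟪c • v, t j⟫
          ≤ (1 / (n : ℝ)) * (n * Real.exp (c * u)) := by
            apply mul_le_mul_of_nonneg_left hsum (by positivity)
        _ = Real.exp (c * u) := by field_simp
    have hcε : 1 - M ≤ c * ε := by
      have : (1 - M) / ε ≤ c := le_max_right _ _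
      calc 1 - M = ((1 - M) / ε) * ε := by field_simp
        _ ≤ c * ε := mul_le_mul_of_nonneg_right this hε.le
    have : kliepLoss tbar t (c • v) ≤ -(c * f tbar) + c * u := by
      unfold kliepLoss
      rw [hinner]
      linarith [hlog]
    have : kliepLoss tbar t (c • v) ≤ -(c * ε) := by
      rw [hεdef]; ring_nf; ring_nf at this; linarith
    linarith
  · -- boundedness from membership (contrapositive)
    intro hub hmem
    obtain ⟨Δ, hΔ⟩ := hub (-(Real.log n))
    rw [mem_convexHull_iff_exists_fintype] at hmem
    obtain ⟨ι, _, w, z, hw0, hw1, hz, hx⟩ := hmem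
    have hne : Nonempty ι := by
      by_contra h
      rw [not_nonempty_iff] at h
      simp [Finset.univ_eq_empty] at hw1
    have hιne : (Finset.univ : Finset ι).Nonempty := Finset.univ_nonempty
    obtain ⟨i0, -, hi0⟩ := Finset.exists_mem_eq_sup' hιne (fun i => ⟪Δ, z i⟫)
    set B : ℝ := ⟪Δ, z i0⟫ with hBdef
    have hmax : ∀ i, ⟪Δ, z i⟫ ≤ B := fun i =>
      hi0 ▸ Finset.le_sup' (fun i => ⟪Δ, z i⟫) (Finset.mem_univ i)
    have hinner : ⟪Δ, tbar⟫ = ∑ i, w i * ⟪Δ, z i⟫ := by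
      rw [← hx, inner_sum]
      exact Finset.sum_congr rfl fun i _ => real_inner_smul_right _ _ _
    have htbarB : ⟪Δ, tbar⟫ ≤ B := by
      rw [hinner]
      calc ∑ i, w i * ⟪Δ, z i⟫ ≤ ∑ i, w i * B :=
            Finset.sum_le_sum fun i _ => mul_le_mul_of_nonneg_left (hmax i) (hw0 i)
        _ = B := by rw [← Finset.sum_mul, hw1, one_mul]
    obtain ⟨j0, hj0⟩ := hz i0
    have hBsum : Real.exp B ≤ ∑ j, Real.exp ⟪Δ, t j⟫ := by
      have h1 : Real.exp B = Real.exp ⟪Δ, t j0⟫ := by rw [hBdef, hj0]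
      rw [h1]
      exact Finset.single_le_sum (f := fun j => Real.exp ⟪Δ, t j⟫) (fun j _ => (Real.exp_pos _).le) (Finset.mem_univ j0)
    have hlogS : B ≤ Real.log (∑ j, Real.exp ⟪Δ, t j⟫) := by
      rw [← Real.log_exp B]
      exact Real.log_le_log (Real.exp_pos _) hBsum
    have hloss : -(Real.log n) ≤ kliepLoss tbar t Δ := by
      unfold kliepLoss
      rw [Real.log_mul (by positivity) (hSpos Δ).ne', Real.log_div one_ne_zero hn0.ne',
        Real.log_one]
      linarith
    linarith
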